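/- Let a, b be real numbers with a < 0 < b and b - a ≥ 4. Then the ReLU function σ_r(x) = max(x, 0) is not uniformly approximable by polynomials with integer coefficients on the interval [a, b]: there is no sequence of integer-coefficient polynomials converging uniformly to σ_r on [a, b]. (This holds because on an interval of length at least 4 only integer-coefficient polynomials themselves can be uniformly approximated, and σ_r does not agree with any polynomial on an interval containing 0 in its interior.) -/

import Mathlib

open Real Polynomial intervalIntegral


noncomputable def Ii (j : ℕ) (ν : ℝ) : ℝ := ∫ θ in (0:ℝ)..π, (Real.cos θ)^j * Real.cos (ν*θ)

lemma Ii_zero_zero : Ii 0 0 = π := by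
  simp [Ii]

lemma Ii_zero (ν : ℝ) (hν : ν ≠ 0) : Ii 0 ν = Real.sin (ν*π)/ν := by
  simp only [Ii, pow_zero, one_mul]
  rw [intervalIntegral.integral_comp_mul_left Real.cos hν]
  simp [integral_cos, div_eq_inv_mul]

lemma Ii_rec (j : ℕ) (ν : ℝ) : Ii (j+1) ν = (Ii j (ν+1) + Ii j (ν-1))/2 := by
  have hcongr : ∀ θ : ℝ, (Real.cos θ)^(j+1) * Real.cos (ν*θ)
      = ((Real.cos θ)^j * Real.cos ((ν+1)*θ) + (Real.cos θ)^j * Real.cos ((ν-1)*θ))/2 := by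
    intro θ
    have h1 : Real.cos ((ν+1)*θ) = Real.cos (ν*θ) * Real.cos θ - Real.sin (ν*θ) * Real.sin θ := by
      rw [show (ν+1)*θ = ν*θ + θ by ring, Real.cos_add]
    have h2 : Real.cos ((ν-1)*θ) = Real.cos (ν*θ) * Real.cos θ + Real.sin (ν*θ) * Real.sin θ := by
      rw [show (ν-1)*θ = ν*θ - θ by ring, Real.cos_sub]
    rw [h1, h2]; ring
  have hi : ∀ μ : ℝ, IntervalIntegrable (fun θ => (Real.cos θ)^j * Real.cos (μ*θ))
      MeasureTheory.volume 0 π := by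
    intro μ
    exact ((Real.continuous_cos.pow j).mul (Real.continuous_cos.comp (continuous_const.mul continuous_id))).intervalIntegrable _ _
  unfold Ii
  rw [intervalIntegral.integral_congr (g := fun θ =>
      ((Real.cos θ)^j * Real.cos ((ν+1)*θ) + (Real.cos θ)^j * Real.cos ((ν-1)*θ))/2)
      (fun θ _ => hcongr θ)]
  rw [intervalIntegral.integral_div, intervalIntegral.integral_add (hi _) (hi _)]

lemma Ii_key : ∀ j n : ℕ, (j < n → Ii j n = 0) ∧ (j = n → Ii j n = π / 2^j) := by
  intro j
  induction j with
  | zero =>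
    intro n
    constructor
    · intro hn
      have hν : (n:ℝ) ≠ 0 := by positivity
      rw [Ii_zero _ hν, show (n:ℝ)*π = n*π by norm_num, Real.sin_nat_mul_pi]
      simp
    · intro hn
      subst hn
      simpa using Ii_zero_zero
  | succ j ih =>
    intro n
    constructor
    · intro hn
      have hn1 : 1 ≤ n := by omega
      have e : ((n:ℝ) - 1) = ((n-1 : ℕ) : ℝ) := by
        push_cast [Nat.cast_sub hn1]; ring
      rw [Ii_rec, show ((n:ℝ)+1) = ((n+1:ℕ):ℝ) by push_cast; ring, (ih (n+1)).1 (by omega), e, (ih (n-1)).1 (by omega)]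
      norm_num
    · intro hn
      subst hn
      have e : ((j+1:ℕ):ℝ) - 1 = (j:ℝ) := by push_cast; ring
      rw [Ii_rec, e, show (((j+1:ℕ):ℝ)+1) = ((j+2:ℕ):ℝ) by push_cast; ring, (ih (j+2)).1 (by omega), (ih j).2 rfl]
      ring

lemma Ii_def (j : ℕ) (ν : ℝ) : Ii j ν = ∫ θ in (0:ℝ)..π, (Real.cos θ)^j * Real.cos (ν*θ) := rfl

lemma int_poly_sup (q : Polynomial ℤ) (hq : q ≠ 0) (c ε : ℝ)
    (h : ∀ x ∈ Set.Icc (c-2) (c+2), |Polynomial.aeval x q| ≤ ε) : 1 ≤ ε := by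
  set Q : Polynomial ℝ := q.map (Int.castRingHom ℝ) with hQdef
  have hQev : ∀ x : ℝ, Q.eval x = Polynomial.aeval x q := by
    intro x; rw [hQdef, Polynomial.eval_map, Polynomial.aeval_def]; rfl
  have hQ0 : Q ≠ 0 := by
    rw [hQdef]
    exact (Polynomial.map_ne_zero_iff (f := Int.castRingHom ℝ) Int.cast_injective).mpr hq
  have hlc : (1:ℝ) ≤ |Q.leadingCoeff| := by
    have : Q.leadingCoeff = ((q.leadingCoeff : ℤ) : ℝ) := by
      rw [hQdef, Polynomial.leadingCoeff_map_of_injective Int.cast_injective]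
      rfl
    rw [this]
    rw [← Int.cast_abs]
    exact_mod_cast Int.one_le_abs (by simpa using Polynomial.leadingCoeff_ne_zero.mpr hq)
  set n := Q.natDegree with hn
  rcases Nat.eq_zero_or_pos n with h0 | hpos
  · -- constant case
    have : Q.eval c = Q.coeff 0 := by
      rw [Polynomial.eval_eq_sum_range, ← hn, h0]
      simp
    have hb := h c (by constructor <;> linarith)
    rw [← hQev] at hb
    have : |Q.leadingCoeff| ≤ ε := by
      rw [Polynomial.leadingCoeff, ← hn, h0, ← this]; exact hb
    linarith
  · set R : Polynomial ℝ := Q.comp (Polynomial.C c + Polynomial.C 2 * Polynomial.X) with hR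
    have hlindeg : (Polynomial.C c + Polynomial.C 2 * Polynomial.X : Polynomial ℝ).natDegree = 1 := by
      compute_degree!
    have hRdeg : R.natDegree = n := by
      rw [hR, Polynomial.natDegree_comp, hlindeg, mul_one]
    have hRlc : R.leadingCoeff = Q.leadingCoeff * 2^n := by
      rw [hR, Polynomial.leadingCoeff_comp (by rw [hlindeg]; norm_num)]
      congr 1
      have : (Polynomial.C c + Polynomial.C 2 * Polynomial.X : Polynomial ℝ).leadingCoeff = 2 := by
        rw [Polynomial.leadingCoeff, hlindeg]
        simp
      rw [this]
    have hReval : ∀ y : ℝ, R.eval y = Q.eval (c + 2*y) := by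
      intro y; rw [hR, Polynomial.eval_comp]; simp
    -- the integral
    have hint : (∫ θ in (0:ℝ)..π, R.eval (Real.cos θ) * Real.cos (n*θ))
        = R.coeff n * (π / 2^n) := by
      have expand : ∀ θ : ℝ, R.eval (Real.cos θ) * Real.cos (n*θ)
          = ∑ j ∈ Finset.range (n+1), R.coeff j * ((Real.cos θ)^j * Real.cos (n*θ)) := by
        intro θ
        rw [Polynomial.eval_eq_sum_range' (n := n+1) (by rw [hRdeg]; omega) (Real.cos θ)]
        rw [Finset.sum_mul]
        congr 1; ext j; ring
      rw [intervalIntegral.integral_congr (g := fun θ =>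
          ∑ j ∈ Finset.range (n+1), R.coeff j * ((Real.cos θ)^j * Real.cos (n*θ)))
          (fun θ _ => expand θ)]
      rw [intervalIntegral.integral_finset_sum]
      · have : ∀ j ∈ Finset.range (n+1),
            (∫ θ in (0:ℝ)..π, R.coeff j * ((Real.cos θ)^j * Real.cos (n*θ)))
            = R.coeff j * Ii j n := by
          intro j _
          rw [intervalIntegral.integral_const_mul, Ii_def]
        rw [Finset.sum_congr rfl this]
        rw [Finset.sum_eq_single n]
        · rw [(Ii_key n n).2 rfl]
        · intro j hj hne
          rw [(Ii_key j n).1 (by simp at hj; omega)]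
          ring
        · intro hn'; simp at hn'
      · intro j _
        exact (continuous_const.mul ((Real.continuous_cos.pow j).mul
          (Real.continuous_cos.comp (continuous_const.mul continuous_id)))).intervalIntegrable _ _
    have hε0 : 0 ≤ ε := le_trans (abs_nonneg _) (h c (by constructor <;> linarith))
    -- bound the integral
    have hbound : |∫ θ in (0:ℝ)..π, R.eval (Real.cos θ) * Real.cos (n*θ)| ≤ ε * |π - 0| := by
      rw [← Real.norm_eq_abs]
      apply intervalIntegral.norm_integral_le_of_norm_le_const
      intro θ _
      have hc : c + 2 * Real.cos θ ∈ Set.Icc (c-2) (c+2) := by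
        have h1 := Real.neg_one_le_cos θ
        have h2 := Real.cos_le_one θ
        constructor <;> [linarith; linarith]
      have h1 : |R.eval (Real.cos θ)| ≤ ε := by
        rw [hReval, hQev]; exact h _ hc
      have h2 : |Real.cos ((n:ℝ)*θ)| ≤ 1 := Real.abs_cos_le_one _
      calc ‖R.eval (Real.cos θ) * Real.cos (n*θ)‖
          = |R.eval (Real.cos θ)| * |Real.cos ((n:ℝ)*θ)| := by
            rw [Real.norm_eq_abs, abs_mul]
        _ ≤ ε * 1 := mul_le_mul h1 h2 (abs_nonneg _) hε0
        _ = ε := mul_one ε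
    rw [hint] at hbound
    have hcoeff : R.coeff n = R.leadingCoeff := by rw [Polynomial.leadingCoeff, hRdeg]
    have hpow : (0:ℝ) < 2^n := by positivity
    have e1 : |R.coeff n * (π / 2^n)| = |Q.leadingCoeff| * π := by
      rw [hcoeff, hRlc, abs_mul, abs_mul, abs_of_pos hpow,
        abs_of_pos (div_pos Real.pi_pos hpow)]
      field_simp
    have hπ : |π - 0| = π := by rw [sub_zero, abs_of_pos Real.pi_pos]
    rw [e1, hπ] at hbound
    have := (mul_le_mul_iff_left₀ Real.pi_pos).mp hbound
    linarith

/-- For `a < 0 < b` with `b - a ≥ 4`, the ReLU function `x ↦ max x 0` is not uniformly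
approximable by polynomials with integer coefficients on `[a, b]`. -/
theorem relu_not_integer_poly_approximable_on_long_interval (a b : ℝ)
    (ha : a < 0) (hb : 0 < b) (hab : b - a ≥ 4) :
    ¬ ∀ ε : ℝ, ε > 0 → ∃ p : Polynomial ℤ,
      ∀ x ∈ Set.Icc a b, |max x 0 - Polynomial.aeval x p| ≤ ε := by
  intro H
  obtain ⟨p, hp⟩ := H (1/4) (by norm_num)
  set c : ℝ := (a+b)/2 with hc
  have hsub : Set.Icc (c-2) (c+2) ⊆ Set.Icc a b := by
    apply Set.Icc_subset_Icc <;> rw [hc] <;> linarith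
  have key : ∀ x ∈ Set.Icc a b, max x 0 = Polynomial.aeval x p := by
    intro x hx
    have habs : ∀ ε : ℝ, 0 < ε → |max x 0 - Polynomial.aeval x p| ≤ ε := by
      intro ε hε
      obtain ⟨q, hq⟩ := H (min ε (1/4)) (by positivity)
      have hpq : p = q := by
        by_contra hne
        have hne' : p - q ≠ 0 := sub_ne_zero.mpr hne
        have h1 : ∀ y ∈ Set.Icc (c-2) (c+2), |Polynomial.aeval y (p - q)| ≤ 1/2 := by
          intro y hy
          have hy' := hsub hy
          have h2 := hp y hy'
          have h3 := hq y hy'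
          have h4 : min ε (1/4) ≤ 1/4 := min_le_right _ _
          rw [map_sub]
          have e : (Polynomial.aeval y p : ℝ) - Polynomial.aeval y q
              = (max y 0 - Polynomial.aeval y q) - (max y 0 - Polynomial.aeval y p) := by ring
          rw [e]
          calc |(max y 0 - Polynomial.aeval y q) - (max y 0 - Polynomial.aeval y p)|
              ≤ |max y 0 - Polynomial.aeval y q| + |max y 0 - Polynomial.aeval y p| :=
                abs_sub _ _
            _ ≤ 1/2 := by linarith
        have := int_poly_sup (p - q) hne' c (1/2) h1
        linarith
      rw [hpq]
      exact le_trans (hq x hx) (min_le_left _ _)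
    by_contra hne
    have hpos : 0 < |max x 0 - Polynomial.aeval x p| := abs_pos.mpr (sub_ne_zero.mpr hne)
    have := habs (|max x 0 - Polynomial.aeval x p|/2) (by linarith)
    linarith
  set P : Polynomial ℝ := p.map (Int.castRingHom ℝ) with hP
  have hPev : ∀ x : ℝ, P.eval x = Polynomial.aeval x p := by
    intro x; rw [hP, Polynomial.eval_map, Polynomial.aeval_def]; rfl
  have hroots : {x : ℝ | P.IsRoot x}.Infinite := by
    apply Set.Infinite.mono (s := Set.Icc a 0)
    · intro x hx
      have hx' : x ∈ Set.Icc a b := ⟨hx.1, le_trans hx.2 hb.le⟩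
      have : max x 0 = Polynomial.aeval x p := key x hx'
      have hmax : max x 0 = 0 := max_eq_right hx.2
      simp only [Set.mem_setOf_eq, Polynomial.IsRoot, hPev]
      rw [← this, hmax]
    · exact Set.Icc_infinite ha
  have hP0 : P = 0 := Polynomial.eq_zero_of_infinite_isRoot P hroots
  have hb' : max b 0 = Polynomial.aeval b p := key b ⟨by linarith, le_refl b⟩
  rw [← hPev, hP0] at hb'
  simp at hb'
  linarith
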